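/- Let a be an n×n complex matrix and let L(ρ) = −i[H,ρ] + Σ_μ D_{L_μ}(ρ) + D_a(ρ) be a Lindblad generator (including the dissipator D_a) whose restriction to the subspace of traceless matrices is injective, and let ρ̄ be a density matrix with L(ρ̄) = 0. Let X be the unique traceless matrix with −L(X) = ρ̄a† − tr(ρ̄a†)ρ̄. Then Re( tr(aX) ) ≥ 0. -/

import Mathlib

open scoped Matrix ComplexOrder

/-- The dissipator `D_X(ρ) = XρX† − (1/2)(X†Xρ + ρX†X)`. -/
noncomputable def dissipator {n : ℕ} (X ρ : Matrix (Fin n) (Fin n) ℂ) :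
    Matrix (Fin n) (Fin n) ℂ :=
  X * ρ * Xᴴ - (1 / 2 : ℂ) • (Xᴴ * X * ρ + ρ * (Xᴴ * X))

open Matrix

/-- Heisenberg-picture dissipator. -/
noncomputable def dstar {n : ℕ} (X A : Matrix (Fin n) (Fin n) ℂ) :
    Matrix (Fin n) (Fin n) ℂ :=
  Xᴴ * A * X - (1 / 2 : ℂ) • (Xᴴ * X * A + A * (Xᴴ * X))

section helpers

variable {n m : ℕ}

lemma tr_cyc3 (A B C : Matrix (Fin n) (Fin n) ℂ) :
    (A * (B * C)).trace = (C * A * B).trace := by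
  rw [← mul_assoc, Matrix.trace_mul_comm, ← mul_assoc]

lemma tr_pair_diss (X M N : Matrix (Fin n) (Fin n) ℂ) :
    (M * dissipator X N).trace = (dstar X M * N).trace := by
  simp only [dissipator, dstar, mul_sub, sub_mul, mul_add, add_mul, mul_smul_comm,
    smul_mul_assoc, Matrix.trace_sub, Matrix.trace_add, Matrix.trace_smul]
  have h1 : (M * (X * N * Xᴴ)).trace = (Xᴴ * M * X * N).trace := by
    rw [show Xᴴ * M * X * N = Xᴴ * (M * (X * N)) by noncomm_ring, tr_cyc3, mul_assoc]
  have h2 : (M * (N * (Xᴴ * X))).trace = (Xᴴ * X * M * N).trace := by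
    rw [← mul_assoc, Matrix.trace_mul_comm, ← mul_assoc]
  have h3 : (M * (Xᴴ * X * N)).trace = (M * (Xᴴ * X) * N).trace := by noncomm_ring
  rw [h1, h2, h3]
  simp only [smul_eq_mul]; ring

lemma tr_pair_ham (H M N : Matrix (Fin n) (Fin n) ℂ) :
    (M * ((-Complex.I) • (H * N - N * H))).trace
      = ((Complex.I • (H * M - M * H)) * N).trace := by
  simp only [mul_smul_comm, smul_mul_assoc, Matrix.trace_smul, mul_sub, sub_mul,
    Matrix.trace_sub]
  have h1 : (M * (N * H)).trace = (H * (M * N)).trace := by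
    rw [← mul_assoc, Matrix.trace_mul_comm]
  have h2 : (M * (H * N)).trace = ((M * H) * N).trace := by rw [mul_assoc]
  rw [h1, h2, show H * M * N = H * (M * N) by rw [mul_assoc]]
  simp only [smul_eq_mul]; ring

lemma dstar_gamma (X A : Matrix (Fin n) (Fin n) ℂ) :
    dstar X (Aᴴ * A) - Aᴴ * dstar X A - dstar X Aᴴ * A
      = (X * A - A * X)ᴴ * (X * A - A * X) := by
  simp only [dstar, conjTranspose_mul, conjTranspose_sub, mul_add, add_mul, mul_sub, sub_mul,
    mul_smul_comm, smul_mul_assoc, smul_add, smul_sub, mul_assoc]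
  module

lemma dstar_conj (X A : Matrix (Fin n) (Fin n) ℂ) : (dstar X A)ᴴ = dstar X Aᴴ := by
  simp only [dstar, conjTranspose_sub, conjTranspose_mul, conjTranspose_smul,
    conjTranspose_add, conjTranspose_conjTranspose, mul_assoc]
  norm_num
  abel

lemma dissipator_add (X ρ σ : Matrix (Fin n) (Fin n) ℂ) :
    dissipator X (ρ + σ) = dissipator X ρ + dissipator X σ := by
  simp only [dissipator, mul_add, add_mul, smul_add]
  abel

lemma dissipator_smul (X : Matrix (Fin n) (Fin n) ℂ) (c : ℂ) (ρ : Matrix (Fin n) (Fin n) ℂ) :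
    dissipator X (c • ρ) = c • dissipator X ρ := by
  simp only [dissipator, mul_smul_comm, smul_mul_assoc, smul_add, smul_sub]
  module

/-- The Lindblad generator as a linear map. -/
noncomputable def genmap (H a : Matrix (Fin n) (Fin n) ℂ) (Lop : Fin m → Matrix (Fin n) (Fin n) ℂ) :
    Matrix (Fin n) (Fin n) ℂ →ₗ[ℂ] Matrix (Fin n) (Fin n) ℂ where
  toFun ρ := (-Complex.I) • (H * ρ - ρ * H) + ∑ μ, dissipator (Lop μ) ρ + dissipator a ρ
  map_add' ρ σ := by
    simp only [dissipator_add, mul_add, add_mul, Finset.sum_add_distrib]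
    simp only [show H * ρ + H * σ - (ρ * H + σ * H) = (H * ρ - ρ * H) + (H * σ - σ * H) by abel,
      smul_add]
    abel
  map_smul' c ρ := by
    simp only [dissipator_smul, mul_smul_comm, smul_mul_assoc, RingHom.id_apply, ← smul_sub,
      ← Finset.smul_sum, smul_add, smul_comm c]

/-- The Heisenberg adjoint of the Lindblad generator. -/
noncomputable def lstar (H a : Matrix (Fin n) (Fin n) ℂ) (Lop : Fin m → Matrix (Fin n) (Fin n) ℂ)
    (A : Matrix (Fin n) (Fin n) ℂ) : Matrix (Fin n) (Fin n) ℂ :=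
  Complex.I • (H * A - A * H) + ∑ μ, dstar (Lop μ) A + dstar a A

lemma tr_pair_full (H a : Matrix (Fin n) (Fin n) ℂ) (Lop : Fin m → Matrix (Fin n) (Fin n) ℂ)
    (M N : Matrix (Fin n) (Fin n) ℂ) :
    (M * genmap H a Lop N).trace = (lstar H a Lop M * N).trace := by
  simp only [genmap, lstar, LinearMap.coe_mk, AddHom.coe_mk, mul_add, add_mul,
    Matrix.trace_add, Matrix.mul_sum, Matrix.sum_mul, Matrix.trace_sum, tr_pair_diss,
    tr_pair_ham]

lemma lstar_conj {H a : Matrix (Fin n) (Fin n) ℂ} (hH : H.IsHermitian)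
    (Lop : Fin m → Matrix (Fin n) (Fin n) ℂ) (A : Matrix (Fin n) (Fin n) ℂ) :
    (lstar H a Lop A)ᴴ = lstar H a Lop Aᴴ := by
  have hsum : (∑ μ, dstar (Lop μ) A)ᴴ = ∑ μ, dstar (Lop μ) Aᴴ := by
    rw [Matrix.conjTranspose_sum]
    exact Finset.sum_congr rfl fun μ _ => dstar_conj _ _
  simp only [lstar, conjTranspose_add, conjTranspose_smul, conjTranspose_sub,
    conjTranspose_mul, hH.eq, dstar_conj, hsum, Complex.star_def, Complex.conj_I]
  congr 1
  congr 1
  module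

lemma lstar_gamma (H a : Matrix (Fin n) (Fin n) ℂ) (Lop : Fin m → Matrix (Fin n) (Fin n) ℂ)
    (A : Matrix (Fin n) (Fin n) ℂ) :
    lstar H a Lop (Aᴴ * A)
      = Aᴴ * lstar H a Lop A + lstar H a Lop Aᴴ * A
        + ((∑ μ, (Lop μ * A - A * Lop μ)ᴴ * (Lop μ * A - A * Lop μ))
          + (a * A - A * a)ᴴ * (a * A - A * a)) := by
  have hham : Complex.I • (H * (Aᴴ * A) - (Aᴴ * A) * H)
      = Aᴴ * (Complex.I • (H * A - A * H)) + (Complex.I • (H * Aᴴ - Aᴴ * H)) * A := by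
    simp only [mul_sub, sub_mul, mul_smul_comm, smul_mul_assoc, smul_sub, mul_assoc]
    module
  have hd : ∀ X : Matrix (Fin n) (Fin n) ℂ,
      dstar X (Aᴴ * A)
        = Aᴴ * dstar X A + dstar X Aᴴ * A + (X * A - A * X)ᴴ * (X * A - A * X) := by
    intro X
    have h := dstar_gamma X A
    rw [sub_eq_iff_eq_add, sub_eq_iff_eq_add] at h
    rw [h]; abel
  simp only [lstar, hd, hham, Finset.sum_add_distrib, Matrix.mul_sum, Matrix.sum_mul,
    mul_add, add_mul]
  abel

lemma tr_mul_std (M : Matrix (Fin n) (Fin n) ℂ) (i j : Fin n) :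
    (M * Matrix.single j i (1:ℂ)).trace = M i j := by
  simp [Matrix.trace, Matrix.diag, Matrix.mul_apply, Matrix.single, ite_and,
    Finset.sum_ite_eq, Finset.sum_ite_eq']

lemma tr_nondeg {M : Matrix (Fin n) (Fin n) ℂ}
    (h : ∀ N, (M * N).trace = 0) : M = 0 := by
  ext i j
  simpa [tr_mul_std] using h (Matrix.single j i (1:ℂ))

noncomputable def Phi :
    Matrix (Fin n) (Fin n) ℂ →ₗ[ℂ] Module.Dual ℂ (Matrix (Fin n) (Fin n) ℂ) where
  toFun M :=
    { toFun := fun N => (M * N).trace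
      map_add' := by intro N N'; simp [mul_add]
      map_smul' := by intro c N; simp [mul_smul_comm] }
  map_add' M M' := by ext N; simp [add_mul]
  map_smul' c M := by ext N; simp [smul_mul_assoc]

lemma exists_preimage (f : Matrix (Fin n) (Fin n) ℂ →ₗ[ℂ] Matrix (Fin n) (Fin n) ℂ)
    (g : Matrix (Fin n) (Fin n) ℂ → Matrix (Fin n) (Fin n) ℂ)
    (pair : ∀ M N, (M * f N).trace = (g M * N).trace)
    (W : Matrix (Fin n) (Fin n) ℂ) (hW : ∀ Z, f Z = 0 → (W * Z).trace = 0) :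
    ∃ A, g A = W := by
  classical
  have hΦinj : Function.Injective (Phi (n := n)) := by
    intro M M' h
    have h0 : ∀ N, ((M - M') * N).trace = 0 := by
      intro N
      have := congrArg (fun φ => φ N) h
      simp only [Phi, LinearMap.coe_mk, AddHom.coe_mk] at this
      simp [sub_mul, this]
    exact sub_eq_zero.mp (tr_nondeg h0)
  have hΦsur : Function.Surjective (Phi (n := n)) := by
    intro φ
    obtain ⟨A, hA⟩ := (LinearMap.linearEquivOfInjective (Phi (n := n)) hΦinj
      (Subspace.dual_finrank_eq (V := Matrix (Fin n) (Fin n) ℂ)).symm).surjective φ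
    exact ⟨A, by rwa [LinearMap.linearEquivOfInjective_apply] at hA⟩
  have hmem : Phi W ∈ (LinearMap.ker f).dualAnnihilator := by
    rw [Submodule.mem_dualAnnihilator]
    intro Z hZ
    exact hW Z (LinearMap.mem_ker.mp hZ)
  rw [← LinearMap.range_dualMap_eq_dualAnnihilator_ker] at hmem
  obtain ⟨φ, hφ⟩ := hmem
  obtain ⟨A, hA⟩ := hΦsur φ
  refine ⟨A, hΦinj ?_⟩
  rw [← hφ, ← hA]
  ext N
  exact (pair A N).symm

lemma psd_trace_re_nonneg {M : Matrix (Fin n) (Fin n) ℂ} (h : M.PosSemidef) :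
    0 ≤ M.trace.re := by
  have key : ∀ i, 0 ≤ (M i i).re := by
    intro i
    have := h.re_dotProduct_nonneg (Pi.single i 1)
    simpa [dotProduct, Matrix.mulVec, Pi.single_apply] using this
  simpa [Matrix.trace, Matrix.diag, Complex.re_sum] using Finset.sum_nonneg fun i _ => key i

end helpers


/-- let `L(ρ) = −i[H,ρ] + Σ_μ D_{L_μ}(ρ) + D_a(ρ)` be a Lindblad generator
whose restriction to traceless matrices is injective, `ρ̄` a density matrix with
`L(ρ̄) = 0`, and `X` the unique traceless matrix with `−L(X) = ρ̄a† − tr(ρ̄a†)ρ̄`.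
Then `Re(tr(aX)) ≥ 0`. -/
theorem stmt17 {n m : ℕ} (a : Matrix (Fin n) (Fin n) ℂ)
    (L : Matrix (Fin n) (Fin n) ℂ → Matrix (Fin n) (Fin n) ℂ)
    (H : Matrix (Fin n) (Fin n) ℂ) (hH : H.IsHermitian)
    (Lop : Fin m → Matrix (Fin n) (Fin n) ℂ)
    (hL : ∀ ρ, L ρ = (-Complex.I) • (H * ρ - ρ * H) + ∑ μ, dissipator (Lop μ) ρ
      + dissipator a ρ)
    (hinj : ∀ X Y : Matrix (Fin n) (Fin n) ℂ,
      X.trace = 0 → Y.trace = 0 → L X = L Y → X = Y)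
    (ρbar : Matrix (Fin n) (Fin n) ℂ) (hpsd : ρbar.PosSemidef) (htr : ρbar.trace = 1)
    (hstat : L ρbar = 0)
    (X : Matrix (Fin n) (Fin n) ℂ) (hXtr : X.trace = 0)
    (hX : -(L X) = ρbar * aᴴ - (ρbar * aᴴ).trace • ρbar) :
    0 ≤ ((a * X).trace).re := by
  classical
  have hLe : ∀ ρ, L ρ = genmap H a Lop ρ := fun ρ => by rw [hL ρ]; rfl
  set 𝓛 := genmap H a Lop with h𝓛
  have hstat' : 𝓛 ρbar = 0 := by rw [← hLe]; exact hstat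
  set t : ℂ := (ρbar * aᴴ).trace with ht
  have hstart : star t = (a * ρbar).trace := by
    rw [ht, ← Matrix.trace_conjTranspose, conjTranspose_mul, conjTranspose_conjTranspose,
      hpsd.1.eq]
  set W : Matrix (Fin n) (Fin n) ℂ := star t • 1 - a with hWdef
  have hWtr : ∀ Z, 𝓛 Z = 0 → (W * Z).trace = 0 := by
    intro Z hZ
    have hZs : Z = Z.trace • ρbar := by
      have h1 : L (Z - Z.trace • ρbar) = L 0 := by
        rw [hLe, hLe, map_sub, LinearMap.map_smul, hZ, hstat', map_zero]
        simp
      have h2 : (Z - Z.trace • ρbar).trace = 0 := by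
        simp [Matrix.trace_smul, htr]
      have := hinj _ 0 h2 (by simp) h1
      rwa [sub_eq_zero] at this
    rw [hZs]
    rw [Matrix.mul_smul, Matrix.trace_smul]
    have : (W * ρbar).trace = 0 := by
      rw [hWdef, sub_mul, Matrix.trace_sub, smul_mul_assoc, one_mul, Matrix.trace_smul,
        htr, hstart]
      simp
    rw [this, smul_zero]
  obtain ⟨A, hA⟩ := exists_preimage 𝓛 (lstar H a Lop) (fun M N => tr_pair_full H a Lop M N)
    W hWtr
  -- hA : lstar H a Lop A = star t • 1 - a
  have hAc : lstar H a Lop Aᴴ = t • 1 - aᴴ := by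
    rw [← lstar_conj hH, hA, hWdef]
    simp [conjTranspose_smul, Matrix.conjTranspose_one]
  -- the main trace chain
  have e1 : (a * X).trace = -((lstar H a Lop A * X).trace) := by
    rw [hA, hWdef, sub_mul, Matrix.trace_sub, smul_mul_assoc, one_mul, Matrix.trace_smul,
      hXtr]
    simp
  have e2 : (lstar H a Lop A * X).trace = (A * 𝓛 X).trace := (tr_pair_full H a Lop A X).symm
  have e3 : (A * 𝓛 X).trace = -((A * (ρbar * aᴴ - t • ρbar)).trace) := by
    have : 𝓛 X = -(ρbar * aᴴ - t • ρbar) := by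
      rw [← hLe, ← hX, neg_neg]
    rw [this, mul_neg, Matrix.trace_neg]
  have e4 : (A * (ρbar * aᴴ - t • ρbar)).trace = (ρbar * ((aᴴ - t • 1) * A)).trace := by
    rw [mul_sub, sub_mul, mul_sub, Matrix.trace_sub, Matrix.trace_sub]
    congr 1
    · rw [tr_cyc3, Matrix.trace_mul_comm]
    · rw [mul_smul_comm, Matrix.trace_smul, smul_mul_assoc, one_mul, mul_smul_comm,
        Matrix.trace_smul, Matrix.trace_mul_comm]
  have e5 : (a * X).trace = -((ρbar * (lstar H a Lop Aᴴ * A)).trace) := by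
    rw [e1, e2, e3, e4, hAc]
    have hns : (aᴴ : Matrix (Fin n) (Fin n) ℂ) - t • 1 = -(t • 1 - aᴴ) := (neg_sub _ _).symm
    rw [hns, neg_mul, mul_neg, Matrix.trace_neg]
    ring
  -- conjugation symmetry
  set S : ℂ := (ρbar * (lstar H a Lop Aᴴ * A)).trace with hS
  set T : ℂ := (ρbar * (Aᴴ * lstar H a Lop A)).trace with hT
  have hconj : S = star T := by
    rw [hT, ← Matrix.trace_conjTranspose]
    rw [conjTranspose_mul, conjTranspose_mul, conjTranspose_conjTranspose, hpsd.1.eq,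
      lstar_conj hH, Matrix.trace_mul_comm, hS]
  -- stationarity + gamma identity
  set G : Matrix (Fin n) (Fin n) ℂ :=
    (∑ μ, (Lop μ * A - A * Lop μ)ᴴ * (Lop μ * A - A * Lop μ))
      + (a * A - A * a)ᴴ * (a * A - A * a) with hG
  have hzero : T + S + (ρbar * G).trace = 0 := by
    have h0 : (Aᴴ * A * 𝓛 ρbar).trace = (lstar H a Lop (Aᴴ * A) * ρbar).trace :=
      tr_pair_full H a Lop (Aᴴ * A) ρbar
    rw [hstat', mul_zero, Matrix.trace_zero] at h0
    have := lstar_gamma H a Lop A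
    rw [← hG] at this
    calc T + S + (ρbar * G).trace
        = (ρbar * (Aᴴ * lstar H a Lop A + lstar H a Lop Aᴴ * A + G)).trace := by
          simp only [mul_add, Matrix.trace_add, hT, hS]
      _ = (ρbar * lstar H a Lop (Aᴴ * A)).trace := by rw [← this]
      _ = 0 := by rw [Matrix.trace_mul_comm]; exact h0.symm
  -- positivity of the gamma term
  have hGpos : 0 ≤ ((ρbar * G).trace).re := by
    have hterm : ∀ C : Matrix (Fin n) (Fin n) ℂ, 0 ≤ ((ρbar * (Cᴴ * C)).trace).re := by
      intro C
      rw [tr_cyc3 ρbar Cᴴ C]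
      exact psd_trace_re_nonneg (hpsd.mul_mul_conjTranspose_same C)
    rw [hG, mul_add, Matrix.trace_add, Matrix.mul_sum, Matrix.trace_sum]
    have h1 : 0 ≤ (∑ μ, (ρbar * ((Lop μ * A - A * Lop μ)ᴴ * (Lop μ * A - A * Lop μ))).trace).re := by
      rw [Complex.re_sum]
      exact Finset.sum_nonneg fun μ _ => hterm _
    have h2 := hterm (a * A - A * a)
    rw [Complex.add_re]
    linarith
  -- conclude
  have hre : ((a * X).trace).re = -S.re := by rw [e5]; simp [hS]
  have hTS : T.re = S.re := by rw [hconj]; simp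
  have := congrArg Complex.re hzero
  rw [Complex.add_re, Complex.add_re, Complex.zero_re] at this
  rw [hre]
  linarith
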